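/- Suppose a, b, c, d ∈ k̄ with ad − bc ≠ 0 and σ ∈ S₆ satisfy θ_j = (c·θ_{σ(j)} + d)/(a·θ_{σ(j)} + b) for all j (with all denominators nonzero). Then ω_j / ω_{σ(j)} = γ / (a·θ_{σ(j)} + b)⁴, where γ = (bc − ad)⁵ / ∏_i (a·θ_{σ(i)} + b) is independent of j. -/

import Mathlib

/-- if `θ_j = (c θ_{σ(j)} + d)/(a θ_{σ(j)} + b)` for all `j`, then
`ω_j / ω_{σ(j)} = γ / (a θ_{σ(j)} + b)⁴` with
`γ = (bc − ad)⁵ / ∏_i (a θ_{σ(i)} + b)` independent of `j`. -/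
theorem stmt16 {K : Type*} [Field K] [IsAlgClosed K] (hchar : (2 : K) ≠ 0)
    (θ : Fin 6 → K) (hθ : Function.Injective θ)
    (σ : Equiv.Perm (Fin 6)) (a b c d : K) (had : a * d - b * c ≠ 0)
    (hden : ∀ j, a * θ (σ j) + b ≠ 0)
    (hrel : ∀ j, θ j = (c * θ (σ j) + d) / (a * θ (σ j) + b))
    (ω : Fin 6 → K)
    (hω : ∀ j, ω j = ∏ i ∈ Finset.univ.filter (· ≠ j), (θ i - θ j)) :
    ∀ j, ω j / ω (σ j) =
      ((b * c - a * d) ^ 5 / ∏ i, (a * θ (σ i) + b)) / (a * θ (σ j) + b) ^ 4 := by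
  intro j
  have hfilter : ∀ j : Fin 6, Finset.univ.filter (· ≠ j) = Finset.univ.erase j := by
    intro j; ext i; simp [Finset.mem_erase]
  have hωσ : ω (σ j) ≠ 0 := by
    rw [hω, hfilter]
    refine Finset.prod_ne_zero_iff.2 fun i hi => ?_
    exact sub_ne_zero.2 fun h => (Finset.mem_erase.1 hi).1 (hθ h)
  have hP : (∏ i, (a * θ (σ i) + b)) ≠ 0 :=
    Finset.prod_ne_zero_iff.2 fun i _ => hden i
  have hcard : (Finset.univ.erase j).card = 5 := by
    simp [Finset.card_erase_of_mem]
  -- factor identity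
  have factor : ∀ i, (θ i - θ j) * ((a * θ (σ i) + b) * (a * θ (σ j) + b))
      = (b * c - a * d) * (θ (σ i) - θ (σ j)) := by
    intro i
    rw [hrel i, hrel j]
    rw [div_sub_div _ _ (hden i) (hden j), div_mul_cancel₀ _ (mul_ne_zero (hden i) (hden j))]
    ring
  -- product of the factor identity over erase j
  have hprodeq : (∏ i ∈ Finset.univ.erase j,
        ((θ i - θ j) * ((a * θ (σ i) + b) * (a * θ (σ j) + b))))
      = ∏ i ∈ Finset.univ.erase j, ((b * c - a * d) * (θ (σ i) - θ (σ j))) := by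
    exact Finset.prod_congr rfl fun i _ => factor i
  have hL : (∏ i ∈ Finset.univ.erase j,
        ((θ i - θ j) * ((a * θ (σ i) + b) * (a * θ (σ j) + b))))
      = ω j * ((∏ i ∈ Finset.univ.erase j, (a * θ (σ i) + b)) * (a * θ (σ j) + b) ^ 5) := by
    rw [Finset.prod_mul_distrib, Finset.prod_mul_distrib, hω, hfilter,
      Finset.prod_const, hcard]
  have hR : (∏ i ∈ Finset.univ.erase j, ((b * c - a * d) * (θ (σ i) - θ (σ j))))
      = (b * c - a * d) ^ 5 * ω (σ j) := by
    rw [Finset.prod_mul_distrib, Finset.prod_const, hcard, hω, hfilter]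
    congr 1
    refine Finset.prod_bij' (fun i _ => σ i) (fun i _ => σ.symm i) ?_ ?_ ?_ ?_ ?_
    · intro i hi
      simp only [Finset.mem_erase, Finset.mem_univ, and_true] at hi ⊢
      exact fun h => hi (σ.injective h)
    · intro i hi
      simp only [Finset.mem_erase, Finset.mem_univ, and_true] at hi ⊢
      intro h; apply hi; rw [← h]; simp
    · intro i _; simp
    · intro i _; simp
    · intro i _; rfl
  have hPsplit : (∏ i, (a * θ (σ i) + b))
      = (a * θ (σ j) + b) * ∏ i ∈ Finset.univ.erase j, (a * θ (σ i) + b) := by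
    exact (Finset.mul_prod_erase Finset.univ _ (Finset.mem_univ j)).symm
  have key : ω j * ((∏ i, (a * θ (σ i) + b)) * (a * θ (σ j) + b) ^ 4)
      = (b * c - a * d) ^ 5 * ω (σ j) := by
    rw [hPsplit, ← hR, ← hprodeq, hL]; ring
  have hden4 : (a * θ (σ j) + b) ^ 4 ≠ 0 := pow_ne_zero _ (hden j)
  rw [div_div, div_eq_div_iff hωσ (mul_ne_zero hP hden4)]
  linear_combination key
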